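/- Redundancy elimination is sound: if two e-nodes v, w in the same e-class have identical multisets of children e-classes and node_cost(v) ≤ node_cost(w), then for every valid extraction selecting w there is a valid extraction selecting v instead with DAG cost less than or equal; hence deleting w does not change the optimal DAG cost. -/
import Mathlib


/-- A valid extraction with respect to the set `kept` of allowed e-nodes: one e-node is
selected per activated e-class, every selected e-node belongs to its class and to `kept`,
all roots are activated, children classes of selected e-nodes are activated, and the
induced dependency graph on e-classes is acyclic (witnessed by a rank function). -/
def Valid {V C : Type*} (cl : V → C) (children : V → Finset C) (roots : Finset C)
    (kept : Set V) (sel : C → V) (act : Finset C) : Prop :=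
  roots ⊆ act ∧
  (∀ c ∈ act, cl (sel c) = c ∧ sel c ∈ kept ∧ children (sel c) ⊆ act) ∧
  ∃ r : C → ℕ, ∀ c ∈ act, ∀ k ∈ children (sel c), k ≠ c → r k < r c

/-- DAG cost of an extraction: sum of node costs of the distinct selected e-nodes
(one per activated class). -/
def DagCost {V C : Type*} (cost : V → ℕ) (sel : C → V) (act : Finset C) : ℕ :=
  ∑ c ∈ act, cost (sel c)

/-- Optimal DAG cost over extractions using only e-nodes in `kept` (`⊤` if none exists). -/
noncomputable def OptCost {V C : Type*} (cl : V → C) (children : V → Finset C)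
    (roots : Finset C) (cost : V → ℕ) (kept : Set V) : ℕ∞ :=
  sInf {x : ℕ∞ | ∃ sel act, Valid cl children roots kept sel act ∧
    x = (DagCost cost sel act : ℕ∞)}

/-- E-nodes kept by pruning at threshold `θ`: those whose heuristic cost is at most
`θ` times the heuristic cost of every e-node of the same class (equivalently, at most
`θ` times the class minimum). -/
def keptSet {V C : Type*} (cl : V → C) (h : V → ℕ) (θ : ℚ) : Set V :=
  {v | ∀ w, cl w = cl v → (h v : ℚ) ≤ θ * (h w : ℚ)}

/-- Redundancy elimination is sound: if two distinct e-nodes `v, w` of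
the same e-class have identical children e-classes and `cost v ≤ cost w`, then every
valid extraction selecting `w` can be turned into a valid extraction selecting `v`
instead, with DAG cost less than or equal; hence deleting `w` does not change the
optimal DAG cost. -/
theorem redundancy_elimination_sound {V C : Type*} [DecidableEq V]
    (cl : V → C) (children : V → Finset C) (roots : Finset C)
    (cost : V → ℕ) (hpos : ∀ u, 0 < cost u)
    (v w : V) (hvw : v ≠ w)
    (hclass : cl v = cl w) (hch : children v = children w) (hcost : cost v ≤ cost w) :
    (∀ sel act, Valid cl children roots Set.univ sel act →
      Valid cl children roots Set.univ (fun c => if sel c = w then v else sel c) act ∧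
      DagCost cost (fun c => if sel c = w then v else sel c) act ≤ DagCost cost sel act) ∧
    OptCost cl children roots cost {u | u ≠ w} =
      OptCost cl children roots cost Set.univ := by
  have key : ∀ sel act, Valid cl children roots Set.univ sel act →
      Valid cl children roots Set.univ (fun c => if sel c = w then v else sel c) act ∧
      DagCost cost (fun c => if sel c = w then v else sel c) act ≤ DagCost cost sel act := by
    intro sel act ⟨hr, hsel, r, hrank⟩
    refine ⟨⟨hr, ?_, r, ?_⟩, ?_⟩
    · intro c hc
      obtain ⟨h1, _, h3⟩ := hsel c hc
      by_cases h : sel c = w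
      · simp only [h, if_pos]
        exact ⟨by rw [hclass, ← h, h1], Set.mem_univ _, by rw [hch, ← h]; exact h3⟩
      · simp only [h, if_neg, if_false]
        exact ⟨h1, Set.mem_univ _, h3⟩
    · intro c hc k hk
      by_cases h : sel c = w
      · simp only [h, if_pos] at hk
        exact hrank c hc k (by rw [h, ← hch]; exact hk)
      · simp only [h, if_neg, if_false] at hk
        exact hrank c hc k hk
    · unfold DagCost
      apply Finset.sum_le_sum
      intro c _
      by_cases h : sel c = w
      · simp [h, hcost]
      · simp [h]
  refine ⟨key, le_antisymm ?_ ?_⟩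
  · apply le_sInf
    rintro x ⟨sel, act, hvalid, rfl⟩
    obtain ⟨hvalid', hle⟩ := key sel act hvalid
    have : Valid cl children roots {u | u ≠ w} (fun c => if sel c = w then v else sel c) act := by
      obtain ⟨hr, hsel, hrank⟩ := hvalid'
      refine ⟨hr, ?_, hrank⟩
      intro c hc
      obtain ⟨h1, _, h3⟩ := hsel c hc
      refine ⟨h1, ?_, h3⟩
      by_cases h : sel c = w <;> simp [h, hvw]
    refine le_trans (sInf_le ⟨_, act, this, rfl⟩) ?_
    exact_mod_cast hle
  · apply le_sInf
    rintro x ⟨sel, act, ⟨hr, hsel, hrank⟩, rfl⟩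
    exact sInf_le ⟨sel, act, ⟨hr, fun c hc => ⟨(hsel c hc).1, Set.mem_univ _, (hsel c hc).2.2⟩, hrank⟩, rfl⟩
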